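/- (Desch–Schappacher–Webb criterion.) Let (T(t))_{t≥0} be a strongly continuous semigroup on a separable complex Banach space B. Let Ω ⊆ ℂ be an open connected set with Ω ∩ iℝ ≠ ∅, and let F : Ω → B be a map such that: (a) T(t)F(λ) = e^{λt} F(λ) for every λ ∈ Ω and every t ≥ 0; (b) for every continuous linear functional φ ∈ B′ the map λ ↦ φ(F(λ)) is holomorphic on Ω; (c) if φ ∈ B′ satisfies φ(F(λ)) = 0 for all λ ∈ Ω, then φ = 0. Then T is chaotic. -/

import Mathlib

open Filter Set Topology

lemma dsw_dense_span {B : Type*} [NormedAddCommGroup B] [NormedSpace ℂ B]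
    (S : Set B) (hsep : ∀ φ : B →L[ℂ] ℂ, (∀ x ∈ S, φ x = 0) → φ = 0) :
    Dense ((Submodule.span ℂ S : Submodule ℂ B) : Set B) := by
  by_contra hnd
  rw [Dense] at hnd
  push_neg at hnd
  obtain ⟨x₀, hx₀⟩ := hnd
  set M := (Submodule.span ℂ S).topologicalClosure with hM
  have hx₀M : x₀ ∉ M := by
    exact fun h => hx₀ (by rw [← Submodule.topologicalClosure_coe]; exact h)
  have hconv : Convex ℝ (M : Set B) := fun x hx y hy a b _ _ _ =>
    M.add_mem (M.smul_of_tower_mem a hx) (M.smul_of_tower_mem b hy)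
  have hclosed : IsClosed (M : Set B) := Submodule.isClosed_topologicalClosure _
  obtain ⟨f, u, hfu, hux⟩ := geometric_hahn_banach_closed_point hconv hclosed hx₀M
  have hf0 : ∀ a ∈ M, f a = 0 := by
    intro a ha
    by_contra h
    have h1 : f (((|u| + 1) / f a) • a) < u :=
      hfu _ (M.smul_of_tower_mem _ ha)
    rw [map_smul, smul_eq_mul, div_mul_cancel₀ _ h] at h1
    linarith [le_abs_self u]
  have hu0 : 0 < u := by
    have := hfu 0 M.zero_mem
    simpa using this
  set φ : B →L[ℂ] ℂ := f.extendTo𝕜' with hφ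
  have hφap : ∀ y : B, φ y = (f y : ℂ) - Complex.I * (f ((Complex.I : ℂ) • y) : ℂ) :=
    fun y => ContinuousLinearMap.extendTo𝕜'_apply f y
  have hφ0 : φ = 0 := by
    apply hsep
    intro x hx
    have hxM : x ∈ M := Submodule.le_topologicalClosure _ (Submodule.subset_span hx)
    have hIxM : (Complex.I : ℂ) • x ∈ M := M.smul_mem _ hxM
    rw [hφap, hf0 x hxM, hf0 _ hIxM]
    simp
  have : φ x₀ = 0 := by rw [hφ0]; rfl
  rw [hφap] at this
  have hre := congrArg Complex.re this
  simp at hre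
  linarith

lemma dsw_tendsto_zero {B : Type*} [NormedAddCommGroup B] [NormedSpace ℂ B]
    {n : ℕ} (a : Fin n → ℂ) (lam : Fin n → ℂ) (c : Fin n → B) (h : ∀ i, (lam i).re < 0) :
    Tendsto (fun t : ℝ => ∑ i, a i • Complex.exp (lam i * t) • c i) atTop (𝓝 0) := by
  have key : ∀ i : Fin n, Tendsto (fun t : ℝ => a i • Complex.exp (lam i * t) • c i)
      atTop (𝓝 0) := by
    intro i
    rw [tendsto_zero_iff_norm_tendsto_zero]
    have heq : (fun t : ℝ => ‖a i • Complex.exp (lam i * t) • c i‖)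
        = fun t : ℝ => ‖a i‖ * ‖c i‖ * Real.exp ((lam i).re * t) := by
      funext t
      rw [norm_smul, norm_smul]
      rw [Complex.norm_exp]
      have : (lam i * t).re = (lam i).re * t := by
        simp [Complex.mul_re]
      rw [this]; ring
    rw [heq]
    have h1 : Tendsto (fun t : ℝ => (lam i).re * t) atTop atBot :=
      (tendsto_const_mul_atBot_of_neg (h i)).mpr tendsto_id
    have h2 : Tendsto (fun t : ℝ => Real.exp ((lam i).re * t)) atTop (𝓝 0) :=
      Real.tendsto_exp_atBot.comp h1
    simpa using h2.const_mul (‖a i‖ * ‖c i‖)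
  simpa using tendsto_finset_sum Finset.univ (fun i _ => key i)

lemma dsw_eqzero {Ω : Set ℂ} (hΩopen : IsOpen Ω) (hΩconn : IsPreconnected Ω)
    {z₀ : ℂ} (hz₀ : z₀ ∈ Ω) {g : ℂ → ℂ} (hg : DifferentiableOn ℂ g Ω)
    {u : ℕ → ℂ} (h1 : Tendsto u atTop (𝓝 z₀)) (h2 : ∀ n, u n ≠ z₀)
    (hgu : ∀ᶠ n in atTop, g (u n) = 0) : EqOn g 0 Ω := by
  have han : AnalyticOnNhd ℂ g Ω := hg.analyticOnNhd hΩopen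
  have hu : Tendsto u atTop (𝓝[≠] z₀) :=
    tendsto_nhdsWithin_of_tendsto_nhds_of_eventually_within u h1
      (Eventually.of_forall h2)
  exact han.eqOn_zero_of_preconnected_of_frequently_eq_zero hΩconn hz₀
    (hu.frequently hgu.frequently)

theorem desch_schappacher_webb_criterion
    {B : Type*} [NormedAddCommGroup B] [NormedSpace ℂ B] [CompleteSpace B]
    [TopologicalSpace.SeparableSpace B]
    (T : ℝ → B →L[ℂ] B)
    (hT0 : T 0 = 1)
    (hTadd : ∀ s t : ℝ, 0 ≤ s → 0 ≤ t → T (s + t) = (T s).comp (T t))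
    (hTcont : ∀ f : B, ContinuousOn (fun t => T t f) (Set.Ici (0 : ℝ)))
    (Ω : Set ℂ) (hΩopen : IsOpen Ω) (hΩconn : IsConnected Ω)
    (hΩim : ∃ z ∈ Ω, z.re = 0)
    (F : ℂ → B)
    (hFeig : ∀ z ∈ Ω, ∀ t : ℝ, 0 ≤ t → T t (F z) = Complex.exp (z * t) • F z)
    (hFhol : ∀ φ : B →L[ℂ] ℂ, DifferentiableOn ℂ (fun z => φ (F z)) Ω)
    (hFsep : ∀ φ : B →L[ℂ] ℂ, (∀ z ∈ Ω, φ (F z) = 0) → φ = 0) :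
    (∃ f : B, Dense {y : B | ∃ t : ℝ, 0 ≤ t ∧ T t f = y}) ∧
      Dense {f : B | ∃ t : ℝ, 0 < t ∧ T t f = f} := by
  classical
  obtain ⟨z₀, hz₀Ω, hz₀re⟩ := hΩim
  have hpre : IsPreconnected Ω := hΩconn.isPreconnected
  -- the basic real sequence 1/(n+1) → 0
  have hseq : Tendsto (fun n : ℕ => (1 : ℝ) / (n + 1)) atTop (𝓝 0) :=
    tendsto_one_div_add_atTop_nhds_zero_nat
  have hseqpos : ∀ n : ℕ, (0 : ℝ) < 1 / (n + 1) := fun n => by positivity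
  have haux : Tendsto (fun n : ℕ => (((1 : ℝ) / (n + 1) : ℝ) : ℂ)) atTop (𝓝 0) := by
    have h := (Complex.continuous_ofReal.tendsto 0).comp hseq
    rw [Complex.ofReal_zero] at h
    exact h
  -- generic density lemma given a suitable sequence
  have density : ∀ (P : ℂ → Prop) (u : ℕ → ℂ),
      Tendsto u atTop (𝓝 z₀) → (∀ n, u n ≠ z₀) → (∀ᶠ n in atTop, u n ∈ Ω ∧ P (u n)) →
      Dense ((Submodule.span ℂ (F '' {z | z ∈ Ω ∧ P z}) : Submodule ℂ B) : Set B) := by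
    intro P u h1 h2 h3
    apply dsw_dense_span
    intro φ hφ
    apply hFsep
    have heq : EqOn (fun z => φ (F z)) 0 Ω := by
      apply dsw_eqzero hΩopen hpre hz₀Ω (hFhol φ) h1 h2
      filter_upwards [h3] with n hn
      exact hφ _ ⟨u n, ⟨hn.1, hn.2⟩, rfl⟩
    intro z hz
    exact heq hz
  -- dense span of eigenvectors with negative real part
  have hDneg : Dense ((Submodule.span ℂ (F '' {z | z ∈ Ω ∧ z.re < 0}) :
      Submodule ℂ B) : Set B) := by
    apply density _ (fun n : ℕ => z₀ - ((1 : ℝ) / (n + 1) : ℝ))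
    · have : Tendsto (fun n : ℕ => (((1 : ℝ) / (n + 1) : ℝ) : ℂ)) atTop (𝓝 0) := haux
      simpa using tendsto_const_nhds.sub this
    · intro n
      intro h
      have : ((1 / (n + 1) : ℝ) : ℂ) = 0 := by
        have := sub_eq_self.mp h
        exact this
      rw [Complex.ofReal_eq_zero] at this
      exact (hseqpos n).ne' this
    · have hmem : ∀ᶠ n : ℕ in atTop, (z₀ - ((1 : ℝ) / (n + 1) : ℝ) : ℂ) ∈ Ω := by
        have h1 : Tendsto (fun n : ℕ => z₀ - ((1 : ℝ) / (n + 1) : ℝ) : ℕ → ℂ) atTop (𝓝 z₀) := by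
          have : Tendsto (fun n : ℕ => (((1 : ℝ) / (n + 1) : ℝ) : ℂ)) atTop (𝓝 0) := haux
          simpa using tendsto_const_nhds.sub this
        exact h1.eventually (hΩopen.mem_nhds hz₀Ω)
      filter_upwards [hmem] with n hn
      refine ⟨hn, ?_⟩
      have hre : (z₀ - (((1 : ℝ) / (n + 1) : ℝ) : ℂ)).re = z₀.re - (1 : ℝ) / (n + 1) := by
        rw [Complex.sub_re, Complex.ofReal_re]
      rw [hre, hz₀re]
      linarith [hseqpos n]
  -- dense span of eigenvectors with positive real part
  have hDpos : Dense ((Submodule.span ℂ (F '' {z | z ∈ Ω ∧ 0 < z.re}) :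
      Submodule ℂ B) : Set B) := by
    apply density _ (fun n : ℕ => z₀ + ((1 : ℝ) / (n + 1) : ℝ))
    · have : Tendsto (fun n : ℕ => (((1 : ℝ) / (n + 1) : ℝ) : ℂ)) atTop (𝓝 0) := haux
      simpa using tendsto_const_nhds.add this
    · intro n h
      have : ((1 / (n + 1) : ℝ) : ℂ) = 0 := by
        have := add_eq_left.mp h
        exact this
      rw [Complex.ofReal_eq_zero] at this
      exact (hseqpos n).ne' this
    · have h1 : Tendsto (fun n : ℕ => z₀ + ((1 : ℝ) / (n + 1) : ℝ) : ℕ → ℂ) atTop (𝓝 z₀) := by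
        have : Tendsto (fun n : ℕ => (((1 : ℝ) / (n + 1) : ℝ) : ℂ)) atTop (𝓝 0) := haux
        simpa using tendsto_const_nhds.add this
      filter_upwards [h1.eventually (hΩopen.mem_nhds hz₀Ω)] with n hn
      refine ⟨hn, ?_⟩
      have hre : (z₀ + (((1 : ℝ) / (n + 1) : ℝ) : ℂ)).re = z₀.re + (1 : ℝ) / (n + 1) := by
        rw [Complex.add_re, Complex.ofReal_re]
      rw [hre, hz₀re]
      linarith [hseqpos n]
  -- dense span of eigenvectors with purely imaginary rational eigenvalue
  have hDrat : Dense ((Submodule.span ℂ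
      (F '' {z | z ∈ Ω ∧ ∃ r : ℚ, z = Complex.I * r}) : Submodule ℂ B) : Set B) := by
    have hq : ∀ n : ℕ, ∃ r : ℚ, z₀.im < (r : ℝ) ∧ (r : ℝ) < z₀.im + 1 / (n + 1) := fun n =>
      exists_rat_btwn (by linarith [hseqpos n])
    choose q hq1 hq2 using hq
    have hz₀eq : z₀ = Complex.I * (z₀.im : ℝ) := by
      apply Complex.ext <;> simp [hz₀re]
    have hqlim : Tendsto (fun n : ℕ => ((q n : ℝ) : ℝ)) atTop (𝓝 z₀.im) := by
      apply tendsto_of_tendsto_of_tendsto_of_le_of_le tendsto_const_nhds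
        (by simpa using tendsto_const_nhds.add hseq)
        (fun n => (hq1 n).le) (fun n => (hq2 n).le)
    have hulim : Tendsto (fun n : ℕ => Complex.I * ((q n : ℝ) : ℂ)) atTop (𝓝 z₀) := by
      rw [hz₀eq]
      exact tendsto_const_nhds.mul ((Complex.continuous_ofReal.tendsto _).comp hqlim)
    apply density _ (fun n : ℕ => Complex.I * ((q n : ℝ) : ℂ))
    · exact hulim
    · intro n h
      rw [hz₀eq] at h
      have := mul_left_cancel₀ Complex.I_ne_zero h
      rw [Complex.ofReal_inj] at this
      exact (hq1 n).ne' this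
    · filter_upwards [hulim.eventually (hΩopen.mem_nhds hz₀Ω)] with n hn
      exact ⟨hn, q n, by push_cast; ring⟩
  -- Periodic points are dense
  have hPsub : ((Submodule.span ℂ (F '' {z | z ∈ Ω ∧ ∃ r : ℚ, z = Complex.I * r}) :
      Submodule ℂ B) : Set B) ⊆ {f : B | ∃ t : ℝ, 0 < t ∧ T t f = f} := by
    intro x hx
    rw [SetLike.mem_coe, Submodule.mem_span_set'] at hx
    obtain ⟨n, a, w, hsum⟩ := hx
    have hw : ∀ i : Fin n, ∃ z, (z ∈ Ω ∧ ∃ r : ℚ, z = Complex.I * r) ∧ F z = (w i : B) :=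
      fun i => (w i).2
    choose z hz hFz using hw
    have hzΩ : ∀ i, z i ∈ Ω := fun i => (hz i).1
    choose r hr using fun i => (hz i).2
    set d : ℕ := ∏ i, (r i).den with hd
    have hdpos : 0 < d := Finset.prod_pos (fun i _ => (r i).pos)
    have hπ : (0 : ℝ) < Real.pi := Real.pi_pos
    have htpos : (0 : ℝ) < 2 * Real.pi * d := by positivity
    refine ⟨2 * Real.pi * d, htpos, ?_⟩
    have hexp : ∀ i, Complex.exp (z i * ((2 * Real.pi * d : ℝ) : ℂ)) = 1 := by
      intro i
      obtain ⟨k, hk⟩ : ((r i).den : ℕ) ∣ d := Finset.dvd_prod_of_mem _ (Finset.mem_univ i)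
      have h0 : (((r i).den : ℕ) : ℚ) ≠ 0 := by
        exact_mod_cast (r i).den_ne_zero
      have h1 := Rat.num_div_den (r i)
      rw [div_eq_iff h0] at h1
      have hrd : (r i : ℚ) * (d : ℚ) = (((r i).num * k : ℤ) : ℚ) := by
        rw [hk]
        push_cast
        rw [← mul_assoc, ← h1]
      have hc : ((r i : ℂ)) * ((d : ℕ) : ℂ) = (((r i).num * k : ℤ) : ℂ) := by
        exact_mod_cast congrArg (fun q : ℚ => (q : ℂ)) hrd
      have harg : z i * ((2 * Real.pi * d : ℝ) : ℂ)
          = (((r i).num * k : ℤ) : ℂ) * (2 * (Real.pi : ℂ) * Complex.I) := by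
        rw [hr i]
        push_cast
        push_cast at hc
        linear_combination (2 * (Real.pi : ℂ) * Complex.I) * hc
      rw [harg]
      exact_mod_cast Complex.exp_int_mul_two_pi_mul_I ((r i).num * k)
    rw [← hsum, map_sum]
    refine Finset.sum_congr rfl (fun i _ => ?_)
    rw [map_smul, ← hFz i, hFeig (z i) (hzΩ i) _ htpos.le, hexp i, one_smul]
  have hPdense : Dense {f : B | ∃ t : ℝ, 0 < t ∧ T t f = f} := hDrat.mono hPsub
  -- topological transitivity
  have trans : ∀ (u v : B) (ε : ℝ), 0 < ε →
      ∃ (zz : B) (t : ℝ), 0 ≤ t ∧ ‖zz - u‖ < ε ∧ ‖T t zz - v‖ < ε := by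
    intro u v ε hε
    obtain ⟨x, hxmem, hxu⟩ := hDneg.exists_dist_lt u (by linarith : (0:ℝ) < ε/2)
    obtain ⟨y, hymem, hyv⟩ := hDpos.exists_dist_lt v (by linarith : (0:ℝ) < ε/2)
    rw [SetLike.mem_coe, Submodule.mem_span_set'] at hxmem hymem
    obtain ⟨n, a, w, hsum⟩ := hxmem
    obtain ⟨m, b, wy, hsumy⟩ := hymem
    have hwx : ∀ i : Fin n, ∃ z, (z ∈ Ω ∧ z.re < 0) ∧ F z = (w i : B) := fun i => (w i).2
    choose lam hlam hFlam using hwx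
    have hwy : ∀ j : Fin m, ∃ z, (z ∈ Ω ∧ 0 < z.re) ∧ F z = (wy j : B) := fun j => (wy j).2
    choose mu hmu hFmu using hwy
    set G : ℝ → B := fun t => ∑ i, a i • Complex.exp (lam i * t) • F (lam i) with hG
    set H : ℝ → B := fun t => ∑ j, b j • Complex.exp (-(mu j) * t) • F (mu j) with hH
    have hGlim : Tendsto G atTop (𝓝 0) := dsw_tendsto_zero a lam _ (fun i => (hlam i).2)
    have hHlim : Tendsto H atTop (𝓝 0) :=
      dsw_tendsto_zero b (fun j => -(mu j)) _ (fun j => by simpa using (hmu j).2)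
    have hGe : ∀ᶠ t in atTop, ‖G t‖ < ε/2 :=
      (tendsto_zero_iff_norm_tendsto_zero.mp hGlim).eventually_lt_const (by linarith)
    have hHe : ∀ᶠ t in atTop, ‖H t‖ < ε/2 :=
      (tendsto_zero_iff_norm_tendsto_zero.mp hHlim).eventually_lt_const (by linarith)
    obtain ⟨t, ht⟩ := ((eventually_ge_atTop (0:ℝ)).and (hGe.and hHe)).exists
    obtain ⟨ht0, hGt, hHt⟩ := ht
    have hxu' : ‖x - u‖ < ε/2 := by
      rw [← dist_eq_norm, dist_comm]; exact hxu
    have hyv' : ‖y - v‖ < ε/2 := by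
      rw [← dist_eq_norm, dist_comm]; exact hyv
    have hTx : T t x = G t := by
      rw [← hsum, map_sum]
      refine Finset.sum_congr rfl fun i _ => ?_
      rw [map_smul, ← hFlam i, hFeig _ (hlam i).1 t ht0]
    have hTH : T t (H t) = y := by
      rw [← hsumy, hH]
      simp only [map_sum, map_smul]
      refine Finset.sum_congr rfl fun j _ => ?_
      rw [hFeig _ (hmu j).1 t ht0, smul_smul, smul_smul, mul_assoc, ← Complex.exp_add,
        neg_mul, neg_add_cancel, Complex.exp_zero, mul_one, hFmu j]
    refine ⟨x + H t, t, ht0, ?_, ?_⟩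
    · have heq : x + H t - u = (x - u) + H t := by abel
      rw [heq]
      calc ‖(x - u) + H t‖ ≤ ‖x - u‖ + ‖H t‖ := norm_add_le _ _
        _ < ε := by linarith
    · rw [map_add, hTx, hTH]
      have heq : G t + y - v = G t + (y - v) := by abel
      rw [heq]
      calc ‖G t + (y - v)‖ ≤ ‖G t‖ + ‖y - v‖ := norm_add_le _ _
        _ < ε := by linarith
  -- Birkhoff transitivity: construct a hypercyclic vector via Baire category
  haveI : SecondCountableTopology B :=
    UniformSpace.secondCountable_of_separable B
  obtain ⟨bas, hbc, hbne, hbB⟩ := TopologicalSpace.exists_countable_basis B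
  have hopen : ∀ V ∈ bas, IsOpen (⋃ t ∈ Ici (0:ℝ), (fun x0 => T t x0) ⁻¹' V) := by
    intro V hV
    exact isOpen_biUnion fun t _ => ((hbB.isOpen hV).preimage (T t).continuous)
  have hdense : ∀ V ∈ bas, Dense (⋃ t ∈ Ici (0:ℝ), (fun x0 => T t x0) ⁻¹' V) := by
    intro V hV
    rw [Metric.dense_iff]
    intro x rr hr
    have hVne : V.Nonempty := Set.nonempty_iff_ne_empty.mpr (by rintro rfl; exact hbne hV)
    obtain ⟨v, hv⟩ := hVne
    obtain ⟨δ, hδ, hball⟩ := Metric.isOpen_iff.mp (hbB.isOpen hV) v hv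
    obtain ⟨zz, t, ht0, h1, h2⟩ := trans x v (min rr δ) (lt_min hr hδ)
    refine ⟨zz, Set.mem_inter ?_ ?_⟩
    · rw [Metric.mem_ball, dist_eq_norm]
      exact h1.trans_le (min_le_left _ _)
    · refine Set.mem_biUnion ht0 ?_
      refine hball ?_
      rw [Metric.mem_ball, dist_eq_norm]
      exact h2.trans_le (min_le_right _ _)
  have hres : Dense (⋂ V ∈ bas, ⋃ t ∈ Ici (0:ℝ), (fun x0 => T t x0) ⁻¹' V) :=
    dense_biInter_of_isOpen hopen hbc hdense
  obtain ⟨f, hf⟩ := hres.nonempty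
  refine ⟨⟨f, ?_⟩, hPdense⟩
  rw [dense_iff_inter_open]
  intro U hU hUne
  obtain ⟨p, hp⟩ := hUne
  obtain ⟨V, hVb, hpV, hVU⟩ := hbB.exists_subset_of_mem_open hp hU
  have hfV : f ∈ ⋃ t ∈ Ici (0:ℝ), (fun x0 => T t x0) ⁻¹' V := by
    exact Set.mem_iInter₂.mp hf V hVb
  rw [Set.mem_iUnion₂] at hfV
  obtain ⟨t, ht0, htV⟩ := hfV
  exact ⟨T t f, hVU htV, t, ht0, rfl⟩
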